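/- Let r, s be real numbers with 0 < r < 1, r < s, and s > 1/2. Then P(r, s) = sin(π·r) · (B(s − r, r) / B(s − 1/2, 1/2))² · P(1 − r, s − r + 1/2). -/

import Mathlib

open Real

/-- Ascending Pochhammer symbol `(x)_k = x(x+1)⋯(x+k−1)`. -/
noncomputable def poch (x : ℝ) (k : ℕ) : ℝ := (ascPochhammer ℝ k).eval x

/-- The Beta function quotient `B(x,y) = Γ(x)Γ(y)/Γ(x+y)`. -/
noncomputable def betaR (x y : ℝ) : ℝ := Gamma x * Gamma y / Gamma (x + y)

/-- Generalized hypergeometric series `₃F₂(a₁,a₂,a₃; b₁,b₂; z)`. -/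
noncomputable def F32 (a1 a2 a3 b1 b2 z : ℝ) : ℝ :=
  ∑' k : ℕ, (poch a1 k * poch a2 k * poch a3 k)
      / (poch b1 k * poch b2 k * (k.factorial : ℝ)) * z ^ k

/-- The hypergeometric period value `P(r,s) = π · B(r, s−r) · ₃F₂(1/2,1/2,r; 1,s; 1)`. -/
noncomputable def P (r s : ℝ) : ℝ := π * betaR r (s - r) * F32 (1/2) (1/2) r 1 s 1

open MeasureTheory Set ENNReal

lemma poch_pos {x : ℝ} (hx : 0 < x) (k : ℕ) : 0 < poch x k :=
  ascPochhammer_pos k x hx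

lemma poch_one (k : ℕ) : poch 1 k = (k.factorial : ℝ) := by
  simpa [poch] using ascPochhammer_eval_one ℝ k

lemma Gamma_add_nat {x : ℝ} (hx : 0 < x) (k : ℕ) :
    Gamma (x + k) = poch x k * Gamma x := by
  induction k with
  | zero => simp [poch]
  | succ n ih =>
    have hxn : x + n ≠ 0 := by positivity
    have : x + (n+1 : ℕ) = (x + n) + 1 := by push_cast; ring
    rw [this, Real.Gamma_add_one hxn, ih]
    show _ = (ascPochhammer ℝ (n+1)).eval x * Gamma x
    rw [ascPochhammer_succ_eval]
    simp only [poch]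
    ring

lemma betaR_pos {x y : ℝ} (hx : 0 < x) (hy : 0 < y) : 0 < betaR x y := by
  unfold betaR
  have := Real.Gamma_pos_of_pos hx
  have := Real.Gamma_pos_of_pos hy
  have := Real.Gamma_pos_of_pos (by linarith : 0 < x + y)
  positivity

lemma complex_beta_fn_eq {x y t : ℝ} (ht : t ∈ Ioo (0:ℝ) 1) :
    ((t:ℂ) ^ ((x:ℂ) - 1) * (1 - (t:ℂ)) ^ ((y:ℂ) - 1)) =
      ((t ^ (x-1) * (1-t) ^ (y-1) : ℝ) : ℂ) := by
  have h1 : ((x:ℂ) - 1) = ((x - 1 : ℝ) : ℂ) := by push_cast; ring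
  have h2 : ((y:ℂ) - 1) = ((y - 1 : ℝ) : ℂ) := by push_cast; ring
  have h3 : (1 - (t:ℂ)) = ((1 - t : ℝ) : ℂ) := by push_cast; ring
  rw [h1, h2, h3, ← Complex.ofReal_cpow ht.1.le, ← Complex.ofReal_cpow (by linarith [ht.2] : (0:ℝ) ≤ 1 - t)]
  push_cast
  ring

lemma integrableOn_beta {x y : ℝ} (hx : 0 < x) (hy : 0 < y) :
    IntegrableOn (fun t : ℝ => t ^ (x-1) * (1-t) ^ (y-1)) (Ioo 0 1) := by
  have hc : IntegrableOn (fun t : ℝ => (t:ℂ) ^ ((x:ℂ) - 1) * (1 - (t:ℂ)) ^ ((y:ℂ) - 1))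
      (Ioo 0 1) := by
    have := Complex.betaIntegral_convergent (u := x) (v := y) (by simpa using hx) (by simpa using hy)
    have h2 := (intervalIntegrable_iff_integrableOn_Ioc_of_le zero_le_one).mp this
    exact h2.mono_set Ioo_subset_Ioc_self
  have hre : IntegrableOn (fun t : ℝ => ((t:ℂ) ^ ((x:ℂ) - 1) * (1 - (t:ℂ)) ^ ((y:ℂ) - 1)).re)
      (Ioo 0 1) := hc.re
  refine MeasureTheory.IntegrableOn.congr_fun hre ?_ measurableSet_Ioo
  intro t ht
  show ((t:ℂ) ^ ((x:ℂ) - 1) * (1 - (t:ℂ)) ^ ((y:ℂ) - 1)).re = _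
  rw [complex_beta_fn_eq ht]
  simp

lemma betaIntegral_real {x y : ℝ} (hx : 0 < x) (hy : 0 < y) :
    ∫ t in Ioo (0:ℝ) 1, t ^ (x-1) * (1-t) ^ (y-1) = betaR x y := by
  have hc := Complex.Gamma_mul_Gamma_eq_betaIntegral
    (s := x) (t := y) (by simpa using hx) (by simpa using hy)
  have hbi : Complex.betaIntegral x y = ((∫ t in Ioo (0:ℝ) 1, t ^ (x-1) * (1-t) ^ (y-1) : ℝ) : ℂ) := by
    rw [Complex.betaIntegral, intervalIntegral.integral_of_le zero_le_one,
      ← MeasureTheory.integral_Ioc_eq_integral_Ioo (f := fun t : ℝ => t ^ (x-1) * (1-t) ^ (y-1))]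
    rw [show (∫ t in Ioc (0:ℝ) 1, (t:ℂ) ^ ((x:ℂ) - 1) * (1 - (t:ℂ)) ^ ((y:ℂ) - 1))
        = ∫ t in Ioc (0:ℝ) 1, ((t ^ (x-1) * (1-t) ^ (y-1) : ℝ) : ℂ) from ?_]
    · exact integral_ofReal
    · rw [MeasureTheory.integral_Ioc_eq_integral_Ioo, MeasureTheory.integral_Ioc_eq_integral_Ioo]
      exact setIntegral_congr_fun measurableSet_Ioo (fun t ht => complex_beta_fn_eq ht)
  rw [hbi, Complex.Gamma_ofReal, Complex.Gamma_ofReal] at hc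
  have hxy : ((x:ℂ) + y) = ((x + y : ℝ) : ℂ) := by push_cast; ring
  rw [hxy, Complex.Gamma_ofReal] at hc
  have hc' : Gamma x * Gamma y = Gamma (x+y) * ∫ t in Ioo (0:ℝ) 1, t ^ (x-1) * (1-t) ^ (y-1) := by
    exact_mod_cast hc
  have hGxy : Gamma (x+y) ≠ 0 := (Real.Gamma_pos_of_pos (by linarith)).ne'
  rw [betaR, hc']
  field_simp

lemma lintegral_beta {x y : ℝ} (hx : 0 < x) (hy : 0 < y) :
    ∫⁻ t in Ioo (0:ℝ) 1, ENNReal.ofReal (t ^ (x-1) * (1-t) ^ (y-1))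
      = ENNReal.ofReal (betaR x y) := by
  rw [← betaIntegral_real hx hy]
  refine (MeasureTheory.ofReal_integral_eq_lintegral_ofReal (integrableOn_beta hx hy) ?_).symm
  refine Filter.eventually_of_mem (self_mem_ae_restrict measurableSet_Ioo) (fun t ht => ?_)
  have h1 : (0:ℝ) < t := ht.1
  have h2 : (0:ℝ) < 1 - t := by linarith [ht.2]
  positivity

lemma lintegral_gamma_scaled {a c : ℝ} (ha : 0 < a) (hc : 0 < c) :
    ∫⁻ v in Ioi (0:ℝ), ENNReal.ofReal (v ^ (a-1) * Real.exp (-(c*v)))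
      = ENNReal.ofReal ((1/c) ^ a * Gamma a) := by
  rw [← Real.integral_rpow_mul_exp_neg_mul_Ioi ha hc]
  refine (MeasureTheory.ofReal_integral_eq_lintegral_ofReal ?_ ?_).symm
  · have h := integrableOn_rpow_mul_exp_neg_mul_rpow (s := a-1) (p := 1) (b := c)
      (by linarith) one_pos hc
    refine MeasureTheory.IntegrableOn.congr_fun h ?_ measurableSet_Ioi
    intro v _
    simp [Real.rpow_one]
  · refine Filter.eventually_of_mem (self_mem_ae_restrict measurableSet_Ioi) (fun v hv => ?_)
    have : (0:ℝ) < v := hv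
    positivity

lemma summable_aux {c y : ℝ} (hc : 0 ≤ c) :
    Summable fun k : ℕ => c * (y ^ k / k.factorial) :=
  (Real.summable_pow_div_factorial y).mul_left c

lemma ennbinom {a x : ℝ} (ha : 0 < a) (hx0 : 0 ≤ x) (hx1 : x < 1) :
    ∑' k : ℕ, ENNReal.ofReal (poch a k / k.factorial * x ^ k)
      = ENNReal.ofReal ((1-x) ^ (-a)) := by
  have hG : 0 < Gamma a := Real.Gamma_pos_of_pos ha
  rw [← ENNReal.mul_left_inj (b := ENNReal.ofReal ((1-x)^(-a)))
    (c := ENNReal.ofReal (Gamma a)) (ENNReal.ofReal_pos.2 hG).ne'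
    ENNReal.ofReal_ne_top]
  rw [← ENNReal.tsum_mul_right]
  have hterm : ∀ k : ℕ, ENNReal.ofReal (poch a k / k.factorial * x ^ k) * ENNReal.ofReal (Gamma a)
      = ∫⁻ v in Ioi (0:ℝ), ENNReal.ofReal (v ^ (a + k - 1) * Real.exp (-v) * (x ^ k / k.factorial)) := by
    intro k
    have hak : (0:ℝ) < a + k := by positivity
    have hswap : ∫⁻ v in Ioi (0:ℝ), ENNReal.ofReal (v ^ (a + k - 1) * Real.exp (-v) * (x ^ k / k.factorial))
        = (∫⁻ v in Ioi (0:ℝ), ENNReal.ofReal (v ^ (a + k - 1) * Real.exp (-(1*v))))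
            * ENNReal.ofReal (x ^ k / k.factorial) := by
      rw [← MeasureTheory.lintegral_mul_const' _ _ ENNReal.ofReal_ne_top]
      refine MeasureTheory.setLIntegral_congr_fun measurableSet_Ioi ?_
      intro v hv
      beta_reduce
      have hv' : (0:ℝ) < v := hv
      rw [← ENNReal.ofReal_mul (by positivity)]
      norm_num
    rw [hswap, lintegral_gamma_scaled hak one_pos]
    have hGk := Real.Gamma_pos_of_pos hak
    have hpk := poch_pos ha k
    rw [← ENNReal.ofReal_mul (by positivity), ← ENNReal.ofReal_mul (by positivity)]
    congr 1
    rw [Gamma_add_nat ha k]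
    have : (0:ℝ) < (k.factorial : ℝ) := by positivity
    field_simp
    simp
  rw [tsum_congr hterm]
  rw [← MeasureTheory.lintegral_tsum (fun k => by fun_prop)]
  have hptwise : ∫⁻ v in Ioi (0:ℝ), ∑' k : ℕ, ENNReal.ofReal (v ^ (a + k - 1) * Real.exp (-v) * (x ^ k / k.factorial))
      = ∫⁻ v in Ioi (0:ℝ), ENNReal.ofReal (v ^ (a-1) * Real.exp (-((1-x)*v))) := by
    refine MeasureTheory.setLIntegral_congr_fun measurableSet_Ioi ?_
    intro v hv
    beta_reduce
    have hv' : (0:ℝ) < v := hv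
    have hre : ∀ k : ℕ, v ^ (a + k - 1) * Real.exp (-v) * (x ^ k / k.factorial)
        = (v ^ (a-1) * Real.exp (-v)) * ((x*v) ^ k / k.factorial) := by
      intro k
      have : v ^ (a + k - 1) = v ^ (a - 1) * v ^ (k:ℕ) := by
        rw [← Real.rpow_natCast v k, ← Real.rpow_add hv']
        ring_nf
      rw [this, mul_pow]
      ring
    have hsum : Summable fun k : ℕ => v ^ (a + k - 1) * Real.exp (-v) * (x ^ k / k.factorial) := by
      refine Summable.congr (summable_aux (c := v ^ (a-1) * Real.exp (-v)) (y := x*v) (by positivity)) ?_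
      intro k; rw [hre k]
    rw [← ENNReal.ofReal_tsum_of_nonneg (fun k => by positivity) hsum]
    congr 1
    rw [tsum_congr hre, tsum_mul_left]
    have hexp : ∑' k : ℕ, ((x*v) ^ k / (k.factorial : ℝ)) = Real.exp (x*v) := by
      rw [Real.exp_eq_exp_ℝ, NormedSpace.exp_eq_tsum_div]
    have harg : -v + x*v = -((1-x)*v) := by ring
    rw [hexp, mul_assoc, ← Real.exp_add, harg]
  rw [hptwise, lintegral_gamma_scaled ha (by linarith : (0:ℝ) < 1 - x)]
  rw [← ENNReal.ofReal_mul (Real.rpow_nonneg (by linarith) _)]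
  congr 1
  rw [one_div, Real.inv_rpow (by linarith : (0:ℝ) ≤ 1 - x), ← Real.rpow_neg (by linarith)]

lemma kernelu {a t : ℝ} (ha : 0 < a) (ht : t ∈ Ioo (0:ℝ) 1) :
    ∫⁻ u in Ioo (0:ℝ) 1,
        ENNReal.ofReal (u ^ (-(1/2):ℝ) * (1-u) ^ (-(1/2):ℝ) * (1 - t*u) ^ (-a))
      = ∑' k : ℕ, ENNReal.ofReal (poch a k / k.factorial * t ^ k)
          * ENNReal.ofReal (betaR (1/2 + (k:ℝ)) (1/2)) := by
  obtain ⟨ht0, ht1⟩ := ht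
  have hpt : ∀ u ∈ Ioo (0:ℝ) 1,
      ENNReal.ofReal (u ^ (-(1/2):ℝ) * (1-u) ^ (-(1/2):ℝ) * (1 - t*u) ^ (-a))
        = ∑' k : ℕ, ENNReal.ofReal (poch a k / k.factorial * t ^ k)
            * ENNReal.ofReal (u ^ ((1/2 + (k:ℝ)) - 1) * (1-u) ^ ((1/2:ℝ) - 1)) := by
    intro u hu
    obtain ⟨hu0, hu1⟩ := hu
    have htu0 : 0 ≤ t * u := by positivity
    have htu1 : t * u < 1 := by nlinarith
    have hbin := ennbinom ha htu0 htu1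
    have h1u : (0:ℝ) < 1 - u := by linarith
    have hA : (0:ℝ) ≤ u ^ (-(1/2):ℝ) * (1-u) ^ (-(1/2):ℝ) :=
      mul_nonneg (Real.rpow_nonneg hu0.le _) (Real.rpow_nonneg h1u.le _)
    have hsplit : ENNReal.ofReal (u ^ (-(1/2):ℝ) * (1-u) ^ (-(1/2):ℝ) * (1 - t*u) ^ (-a))
        = ENNReal.ofReal (u ^ (-(1/2):ℝ) * (1-u) ^ (-(1/2):ℝ))
            * ENNReal.ofReal ((1 - t*u) ^ (-a)) := by
      rw [← ENNReal.ofReal_mul hA]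
    rw [hsplit, ← hbin, ← ENNReal.tsum_mul_left]
    refine tsum_congr (fun k => ?_)
    have hp := poch_pos ha k
    rw [← ENNReal.ofReal_mul hA, ← ENNReal.ofReal_mul (by positivity : (0:ℝ) ≤ poch a k / k.factorial * t ^ k)]
    congr 1
    have he1 : u ^ ((1/2 + (k:ℝ)) - 1) = u ^ (-(1/2):ℝ) * u ^ (k:ℕ) := by
      rw [← Real.rpow_natCast u k, ← Real.rpow_add hu0]
      ring_nf
    rw [he1, show ((1/2:ℝ) - 1) = (-(1/2):ℝ) by norm_num, mul_pow]
    ring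
  rw [MeasureTheory.setLIntegral_congr_fun measurableSet_Ioo
    hpt]
  rw [MeasureTheory.lintegral_tsum (fun k => by fun_prop)]
  refine tsum_congr (fun k => ?_)
  rw [MeasureTheory.lintegral_const_mul' _ _ ENNReal.ofReal_ne_top]
  congr 1
  exact lintegral_beta (by positivity) (by norm_num)

noncomputable def Dint (a e : ℝ) : ℝ≥0∞ :=
  ∫⁻ t in Ioo (0:ℝ) 1, ENNReal.ofReal (t ^ (-(1/2):ℝ) * (1-t) ^ (e - 3/2)) *
    ∫⁻ u in Ioo (0:ℝ) 1,
      ENNReal.ofReal (u ^ (-(1/2):ℝ) * (1-u) ^ (-(1/2):ℝ) * (1 - t*u) ^ (-a))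

lemma core1_arith {a e : ℝ} (he : 1/2 < e) (k : ℕ) :
    poch a k / k.factorial * betaR (1/2 + (k:ℝ)) (1/2) * betaR (1/2 + (k:ℝ)) (e - 1/2)
      = π * betaR (1/2) (e - 1/2)
          * (poch (1/2) k * poch (1/2) k * poch a k / (poch 1 k * poch e k * k.factorial)) := by
  have he' : (0:ℝ) < e := by linarith
  have h1 : Gamma (1/2 + (k:ℝ)) = poch (1/2) k * Gamma (1/2) :=
    Gamma_add_nat (by norm_num) k
  have h2 : Gamma (1/2 + (k:ℝ) + 1/2) = (k.factorial : ℝ) := by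
    rw [show (1/2 + (k:ℝ) + 1/2) = 1 + (k:ℝ) by ring, Gamma_add_nat one_pos k, poch_one,
      Real.Gamma_one, mul_one]
  have h3 : Gamma (1/2 + (k:ℝ) + (e - 1/2)) = poch e k * Gamma e := by
    rw [show (1/2 + (k:ℝ) + (e - 1/2)) = e + (k:ℝ) by ring, Gamma_add_nat he' k]
  have h4 : (1/2 : ℝ) + (e - 1/2) = e := by ring
  have hg : Gamma (1/2 : ℝ) * Gamma (1/2 : ℝ) = π := by
    rw [Real.Gamma_one_half_eq]
    exact Real.mul_self_sqrt pi_nonneg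
  have hfac : (0:ℝ) < (k.factorial : ℝ) := by positivity
  have hpoch1 : poch 1 k = (k.factorial : ℝ) := poch_one k
  have hge : (0:ℝ) < Gamma e := Real.Gamma_pos_of_pos he'
  have hge2 : (0:ℝ) < Gamma (e - 1/2) := Real.Gamma_pos_of_pos (by linarith)
  have hpe : 0 < poch e k := poch_pos he' k
  unfold betaR
  rw [h1, h2, h3, h4, hpoch1, ← hg]
  field_simp

lemma core1 {a e : ℝ} (ha : 0 < a) (he : 1/2 < e) :
    Dint a e = ENNReal.ofReal (π * betaR (1/2) (e - 1/2)) *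
      ∑' k : ℕ, ENNReal.ofReal (poch (1/2) k * poch (1/2) k * poch a k /
        (poch 1 k * poch e k * k.factorial)) := by
  have he' : (0:ℝ) < e := by linarith
  have hstep : Dint a e = ∑' k : ℕ,
      ENNReal.ofReal (poch a k / k.factorial * betaR (1/2 + (k:ℝ)) (1/2))
        * ENNReal.ofReal (betaR (1/2 + (k:ℝ)) (e - 1/2)) := by
    unfold Dint
    have hpt : ∀ t ∈ Ioo (0:ℝ) 1,
        ENNReal.ofReal (t ^ (-(1/2):ℝ) * (1-t) ^ (e - 3/2)) *
          (∫⁻ u in Ioo (0:ℝ) 1,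
            ENNReal.ofReal (u ^ (-(1/2):ℝ) * (1-u) ^ (-(1/2):ℝ) * (1 - t*u) ^ (-a)))
        = ∑' k : ℕ, ENNReal.ofReal (poch a k / k.factorial * betaR (1/2 + (k:ℝ)) (1/2))
            * ENNReal.ofReal (t ^ ((1/2 + (k:ℝ)) - 1) * (1-t) ^ ((e - 1/2) - 1)) := by
      intro t ht
      rw [kernelu ha ht, ← ENNReal.tsum_mul_left]
      refine tsum_congr (fun k => ?_)
      obtain ⟨ht0, ht1⟩ := ht
      have h1t : (0:ℝ) < 1 - t := by linarith
      have hp := poch_pos ha k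
      have hb1 : 0 < betaR (1/2 + (k:ℝ)) (1/2) := betaR_pos (by positivity) (by norm_num)
      rw [← ENNReal.ofReal_mul (by positivity : (0:ℝ) ≤ poch a k / k.factorial * t ^ k),
        ← ENNReal.ofReal_mul (mul_nonneg (Real.rpow_nonneg ht0.le _) (Real.rpow_nonneg h1t.le _)),
        ← ENNReal.ofReal_mul (by positivity : (0:ℝ) ≤ poch a k / k.factorial * betaR (1/2 + (k:ℝ)) (1/2))]
      congr 1
      have he1 : t ^ ((1/2 + (k:ℝ)) - 1) = t ^ (-(1/2):ℝ) * t ^ (k:ℕ) := by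
        rw [← Real.rpow_natCast t k, ← Real.rpow_add ht0]
        ring_nf
      rw [he1, show ((e - 1/2) - 1 : ℝ) = e - 3/2 by ring]
      ring
    rw [MeasureTheory.setLIntegral_congr_fun measurableSet_Ioo
      hpt]
    rw [MeasureTheory.lintegral_tsum (fun k => by fun_prop)]
    refine tsum_congr (fun k => ?_)
    rw [MeasureTheory.lintegral_const_mul' _ _ ENNReal.ofReal_ne_top]
    congr 1
    exact lintegral_beta (by positivity) (by linarith)
  rw [hstep, ← ENNReal.tsum_mul_left]
  refine tsum_congr (fun k => ?_)
  have hp := poch_pos ha k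
  have hb1 : 0 < betaR (1/2 + (k:ℝ)) (1/2) := betaR_pos (by positivity) (by norm_num)
  have hb2 : 0 < betaR (1/2) (e - 1/2) := betaR_pos (by norm_num) (by linarith)
  have hp2 := poch_pos (show (0:ℝ) < 1/2 by norm_num) k
  have hpe := poch_pos he' k
  have hp1 := poch_pos one_pos k
  rw [← ENNReal.ofReal_mul (by positivity : (0:ℝ) ≤ poch a k / k.factorial * betaR (1/2 + (k:ℝ)) (1/2)),
    ← ENNReal.ofReal_mul (by positivity : (0:ℝ) ≤ π * betaR (1/2) (e - 1/2))]
  rw [core1_arith he k]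

lemma div_rpow' {b c : ℝ} (hb : 0 ≤ b) (hc : 0 < c) (e : ℝ) :
    (b/c) ^ e = b ^ e * c ^ (-e) := by
  rw [Real.div_rpow hb hc.le, Real.rpow_neg hc.le, div_eq_mul_inv]

lemma subst_pointwise {r t u : ℝ} (hr0 : 0 < r) (hr1 : r < 1)
    (ht0 : 0 < t) (ht1 : t < 1) (hu0 : 0 < u) (hu1 : u < 1) :
    ((1-t)/(1 - t*u)^2) *
      (((1-u)/(1-t*u)) ^ (-(1/2):ℝ) * ((u*(1-t))/(1-t*u)) ^ (-(1/2):ℝ)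
        * (((1-t)/(1-t*u))) ^ (r-1))
    = (1-t) ^ (r - 1/2) * (u ^ (-(1/2):ℝ) * (1-u) ^ (-(1/2):ℝ) * (1 - t*u) ^ (-r)) := by
  have h1u : (0:ℝ) < 1 - u := by linarith
  have hA : (0:ℝ) < 1 - t*u := by nlinarith
  have hp : (0:ℝ) < 1 - t := by linarith
  set A := 1 - t*u with hAdef
  set p := 1 - t with hpdef
  have e1 : ((1-u)/A) ^ (-(1/2):ℝ) = (1-u) ^ (-(1/2):ℝ) * A ^ ((1/2):ℝ) := by
    rw [div_rpow' h1u.le hA _]; norm_num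
  have e2 : ((u*p)/A) ^ (-(1/2):ℝ) = u ^ (-(1/2):ℝ) * p ^ (-(1/2):ℝ) * A ^ ((1/2):ℝ) := by
    rw [div_rpow' (by positivity) hA _, Real.mul_rpow hu0.le hp.le]; norm_num
  have e3 : (p/A) ^ (r-1) = p ^ (r-1) * A ^ (1-r) := by
    rw [div_rpow' hp.le hA _]; ring_nf
  have e4 : p / A^2 = p ^ (1:ℝ) * A ^ (-(2:ℝ)) := by
    rw [Real.rpow_one, Real.rpow_neg hA.le, ← Real.rpow_natCast A 2]
    norm_num
    rw [div_eq_mul_inv]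
  rw [e1, e2, e3, e4]
  have hcollect : p ^ (1:ℝ) * A ^ (-(2:ℝ)) *
      ((1-u) ^ (-(1/2):ℝ) * A ^ ((1/2):ℝ) *
        (u ^ (-(1/2):ℝ) * p ^ (-(1/2):ℝ) * A ^ ((1/2):ℝ)) * (p ^ (r-1) * A ^ (1-r)))
      = (p ^ (1:ℝ) * p ^ (-(1/2):ℝ) * p ^ (r-1)) *
        (A ^ (-(2:ℝ)) * A ^ ((1/2):ℝ) * A ^ ((1/2):ℝ) * A ^ (1-r)) *
        (u ^ (-(1/2):ℝ) * (1-u) ^ (-(1/2):ℝ)) := by ring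
  rw [hcollect, ← Real.rpow_add hp, ← Real.rpow_add hp,
    ← Real.rpow_add hA, ← Real.rpow_add hA, ← Real.rpow_add hA]
  rw [show (1:ℝ) + -(1/2) + (r-1) = r - 1/2 by ring,
    show (-(2:ℝ)) + 1/2 + 1/2 + (1-r) = -r by ring]
  ring

lemma subst_inner {r t : ℝ} (hr0 : 0 < r) (hr1 : r < 1) (ht : t ∈ Ioo (0:ℝ) 1) :
    ∫⁻ u in Ioo (0:ℝ) 1,
        ENNReal.ofReal (u ^ (-(1/2):ℝ) * (1-u) ^ (-(1/2):ℝ) * (1 - t*u) ^ (r-1))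
      = ENNReal.ofReal ((1-t) ^ (r - 1/2)) *
        ∫⁻ u in Ioo (0:ℝ) 1,
          ENNReal.ofReal (u ^ (-(1/2):ℝ) * (1-u) ^ (-(1/2):ℝ) * (1 - t*u) ^ (-r)) := by
  obtain ⟨ht0, ht1⟩ := ht
  set φ : ℝ → ℝ := fun u => (1-u)/(1 - t*u) with hφ
  have hden : ∀ u ∈ Ioo (0:ℝ) 1, (0:ℝ) < 1 - t*u := by
    intro u hu; nlinarith [hu.1, hu.2]
  have hmaps : ∀ u ∈ Ioo (0:ℝ) 1, φ u ∈ Ioo (0:ℝ) 1 := by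
    intro u hu
    obtain ⟨hu0, hu1⟩ := hu
    have hA := hden u ⟨hu0, hu1⟩
    constructor
    · apply div_pos (by linarith) hA
    · rw [div_lt_one hA]; nlinarith
  have hinvol : ∀ u ∈ Ioo (0:ℝ) 1, φ (φ u) = u := by
    intro u hu
    have hA := hden u hu
    have hA2 : 1 - t * φ u ≠ 0 := (hden _ (hmaps u hu)).ne'
    simp only [hφ] at hA2 ⊢
    field_simp at hA2 ⊢
    have h1t : (1:ℝ) - t ≠ 0 := by linarith
    linear_combination u * mul_inv_cancel₀ h1t
  have hinj : Set.InjOn φ (Ioo 0 1) := by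
    intro a ha b hb hab
    have := hinvol a ha
    rw [hab, hinvol b hb] at this
    exact this.symm
  have himg : φ '' Ioo 0 1 = Ioo 0 1 := by
    apply Set.Subset.antisymm
    · rintro v ⟨u, hu, rfl⟩; exact hmaps u hu
    · intro v hv
      exact ⟨φ v, hmaps v hv, hinvol v hv⟩
  have hderiv : ∀ u ∈ Ioo (0:ℝ) 1,
      HasDerivWithinAt φ ((t-1)/(1 - t*u)^2) (Ioo 0 1) u := by
    intro u hu
    have hA := hden u hu
    have h1 : HasDerivAt (fun u : ℝ => 1 - u) (-1) u := by
      simpa using ((hasDerivAt_id u).const_sub 1)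
    have h2 : HasDerivAt (fun u : ℝ => 1 - t*u) (-t) u := by
      simpa using ((hasDerivAt_id u).const_mul t).const_sub 1
    have := h1.div h2 hA.ne'
    rw [show (t-1)/(1 - t*u)^2 = (-1 * (1 - t * u) - (1 - u) * -t) / (1 - t * u) ^ 2 by ring]
    exact this.hasDerivWithinAt
  have key := MeasureTheory.lintegral_image_eq_lintegral_abs_det_fderiv_mul volume
    measurableSet_Ioo (fun u hu => ((hderiv u hu).hasFDerivWithinAt))
    hinj (fun u => ENNReal.ofReal (u ^ (-(1/2):ℝ) * (1-u) ^ (-(1/2):ℝ) * (1 - t*u) ^ (r-1)))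
  rw [himg] at key
  rw [key]
  rw [← MeasureTheory.lintegral_const_mul' _ _ ENNReal.ofReal_ne_top]
  refine MeasureTheory.setLIntegral_congr_fun measurableSet_Ioo
    ?_
  intro u hu
  beta_reduce
  obtain ⟨hu0, hu1⟩ := hu
  have hA := hden u ⟨hu0, hu1⟩
  have h1u : (0:ℝ) < 1 - u := by linarith
  have hp : (0:ℝ) < 1 - t := by linarith
  have habs : |ContinuousLinearMap.det
      (ContinuousLinearMap.toSpanSingleton ℝ ((t-1)/(1 - t*u)^2))|
      = (1-t)/(1 - t*u)^2 := by
    rw [ContinuousLinearMap.det_toSpanSingleton]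
    rw [abs_div, abs_of_neg (by linarith : t - 1 < 0), abs_of_pos (by positivity)]
    ring_nf
  rw [habs]
  have hφu : φ u = (1-u)/(1 - t*u) := rfl
  have h1φ : 1 - φ u = u*(1-t)/(1 - t*u) := by
    rw [hφu, eq_div_iff hA.ne', sub_mul, div_mul_cancel₀ _ hA.ne']; ring
  have h2φ : 1 - t * φ u = (1-t)/(1 - t*u) := by
    rw [hφu]; field_simp; ring
  rw [hφu, h1φ, h2φ]
  rw [← ENNReal.ofReal_mul (by positivity)]
  rw [← ENNReal.ofReal_mul (Real.rpow_nonneg hp.le _)]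
  congr 1
  exact subst_pointwise hr0 hr1 ht0 ht1 hu0 hu1

lemma core2 {r s : ℝ} (hr0 : 0 < r) (hr1 : r < 1) (hrs : r < s) (hs : 1/2 < s) :
    Dint (1-r) (s - r + 1/2) = Dint r s := by
  unfold Dint
  refine MeasureTheory.setLIntegral_congr_fun measurableSet_Ioo
    ?_
  intro t ht
  beta_reduce
  obtain ⟨ht0, ht1⟩ := ht
  have hp : (0:ℝ) < 1 - t := by linarith
  have hinner : (∫⁻ u in Ioo (0:ℝ) 1,
      ENNReal.ofReal (u ^ (-(1/2):ℝ) * (1-u) ^ (-(1/2):ℝ) * (1 - t*u) ^ (-(1-r))))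
      = ENNReal.ofReal ((1-t) ^ (r - 1/2)) *
        ∫⁻ u in Ioo (0:ℝ) 1,
          ENNReal.ofReal (u ^ (-(1/2):ℝ) * (1-u) ^ (-(1/2):ℝ) * (1 - t*u) ^ (-r)) := by
    rw [show -(1-r) = r - 1 by ring]
    exact subst_inner hr0 hr1 ⟨ht0, ht1⟩
  rw [hinner, ← mul_assoc]
  congr 1
  rw [← ENNReal.ofReal_mul (mul_nonneg (Real.rpow_nonneg ht0.le _) (Real.rpow_nonneg hp.le _))]
  congr 1
  rw [mul_assoc, ← Real.rpow_add hp, show (s - r + 1/2 - 3/2) + (r - 1/2) = s - 3/2 by ring]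

noncomputable def Tsum (c e : ℝ) : ℝ≥0∞ :=
  ∑' k : ℕ, ENNReal.ofReal (poch (1/2) k * poch (1/2) k * poch c k /
    (poch 1 k * poch e k * k.factorial))

lemma F32_toReal {c e : ℝ} (hc : 0 < c) (he : 0 < e) :
    F32 (1/2) (1/2) c 1 e 1 = (Tsum c e).toReal := by
  rw [Tsum, ENNReal.tsum_toReal_eq (fun k => ENNReal.ofReal_ne_top)]
  unfold F32
  refine tsum_congr (fun k => ?_)
  have h1 := poch_pos (show (0:ℝ) < 1/2 by norm_num) k
  have h2 := poch_pos hc k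
  have h3 := poch_pos he k
  have h4 := poch_pos (show (0:ℝ) < 1 by norm_num) k
  rw [ENNReal.toReal_ofReal (by positivity)]
  rw [one_pow, mul_one]

lemma mainrel {r s : ℝ} (hr0 : 0 < r) (hr1 : r < 1) (hrs : r < s) (hs : 1/2 < s) :
    π * betaR (1/2) (s - 1/2) * F32 (1/2) (1/2) r 1 s 1
      = π * betaR (1/2) (s - r) * F32 (1/2) (1/2) (1-r) 1 (s - r + 1/2) 1 := by
  have h1 := core1 hr0 hs
  have h2 := core1 (show (0:ℝ) < 1 - r by linarith)
    (show (1:ℝ)/2 < s - r + 1/2 by linarith)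
  rw [core2 hr0 hr1 hrs hs] at h2
  rw [show (s - r + 1/2 - 1/2 : ℝ) = s - r by ring] at h2
  have key : ENNReal.ofReal (π * betaR (1/2) (s - 1/2)) * Tsum r s
      = ENNReal.ofReal (π * betaR (1/2) (s - r)) * Tsum (1-r) (s - r + 1/2) := by
    rw [Tsum, Tsum, ← h1, ← h2]
  have hc1 : (0:ℝ) < π * betaR (1/2) (s - 1/2) := by
    have := betaR_pos (show (0:ℝ) < 1/2 by norm_num) (show (0:ℝ) < s - 1/2 by linarith)
    positivity
  have hc2 : (0:ℝ) < π * betaR (1/2) (s - r) := by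
    have := betaR_pos (show (0:ℝ) < 1/2 by norm_num) (show (0:ℝ) < s - r by linarith)
    positivity
  rw [F32_toReal hr0 (by linarith), F32_toReal (by linarith) (by linarith)]
  by_cases hT : Tsum r s = ⊤
  · have hT2 : Tsum (1-r) (s - r + 1/2) = ⊤ := by
      by_contra hne
      rw [hT, ENNReal.mul_top (ENNReal.ofReal_pos.2 hc1).ne'] at key
      exact (ENNReal.mul_ne_top ENNReal.ofReal_ne_top hne) key.symm
    rw [hT, hT2]
    simp
  · have hT2 : Tsum (1-r) (s - r + 1/2) ≠ ⊤ := by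
      intro hne
      rw [hne, ENNReal.mul_top (ENNReal.ofReal_pos.2 hc2).ne'] at key
      exact (ENNReal.mul_ne_top ENNReal.ofReal_ne_top hT) key
    have := congrArg ENNReal.toReal key
    rw [ENNReal.toReal_mul, ENNReal.toReal_mul, ENNReal.toReal_ofReal hc1.le,
      ENNReal.toReal_ofReal hc2.le] at this
    exact this

lemma coeff_identity {r s : ℝ} (hr0 : 0 < r) (hr1 : r < 1) (hrs : r < s) (hs : 1/2 < s) :
    betaR r (s-r) * (π * betaR (1/2) (s-r))
      = Real.sin (π * r) * (betaR (s-r) r / betaR (s-1/2) (1/2)) ^ 2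
          * betaR (1-r) (s-1/2) * (π * betaR (1/2) (s-1/2)) := by
  have hγr : (0:ℝ) < Gamma r := Real.Gamma_pos_of_pos hr0
  have hγ1r : (0:ℝ) < Gamma (1-r) := Real.Gamma_pos_of_pos (by linarith)
  have hγsr : (0:ℝ) < Gamma (s-r) := Real.Gamma_pos_of_pos (by linarith)
  have hγs : (0:ℝ) < Gamma s := Real.Gamma_pos_of_pos (by linarith)
  have hγsh : (0:ℝ) < Gamma (s-1/2) := Real.Gamma_pos_of_pos (by linarith)
  have hγsrh : (0:ℝ) < Gamma (s-r+1/2) := Real.Gamma_pos_of_pos (by linarith)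
  have hγh : (0:ℝ) < Gamma (1/2:ℝ) := Real.Gamma_pos_of_pos (by norm_num)
  have hsin0 : Real.sin (π * r) ≠ 0 := by
    refine (Real.sin_pos_of_pos_of_lt_pi (by positivity) ?_).ne'
    nlinarith [pi_pos]
  have h := Real.Gamma_mul_Gamma_one_sub r
  rw [eq_div_iff hsin0] at h
  have hsin' : Real.sin (π * r) = π / (Gamma r * Gamma (1-r)) := by
    field_simp
    linarith [h]
  have hππ : π = Gamma (1/2:ℝ) * Gamma (1/2:ℝ) := by
    rw [Real.Gamma_one_half_eq]
    exact (Real.mul_self_sqrt pi_nonneg).symm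
  unfold betaR
  rw [show r + (s-r) = s by ring, show (1:ℝ)/2 + (s-r) = s-r+1/2 by ring,
    show (s-r) + r = s by ring, show (s-(1:ℝ)/2) + 1/2 = s by ring,
    show (1-r) + (s-(1:ℝ)/2) = s-r+1/2 by ring, show (1:ℝ)/2 + (s-1/2) = s by ring]
  rw [hsin', hππ]
  set γr := Gamma r
  set γ1r := Gamma (1-r)
  set γsr := Gamma (s-r)
  set γs := Gamma s
  set γsh := Gamma (s-1/2)
  set γsrh := Gamma (s-r+1/2)
  set γh := Gamma (1/2:ℝ)
  field_simp


/-- Specialized Kummer relation for the period values `P(r,s)`. -/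
theorem P_kummer (r s : ℝ) (hr0 : 0 < r) (hr1 : r < 1) (hrs : r < s) (hs : 1/2 < s) :
    P r s = Real.sin (π * r) * (betaR (s - r) r / betaR (s - 1/2) (1/2)) ^ 2
        * P (1 - r) (s - r + 1/2) := by
  have hrel := mainrel hr0 hr1 hrs hs
  have hco := coeff_identity hr0 hr1 hrs hs
  have hc1 : (0:ℝ) < π * betaR (1/2) (s-1/2) := by
    have := betaR_pos (show (0:ℝ) < 1/2 by norm_num) (show (0:ℝ) < s - 1/2 by linarith)
    positivity
  unfold P
  rw [show (s - r + 1/2 - (1-r) : ℝ) = s - 1/2 by ring]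
  apply mul_left_cancel₀ hc1.ne'
  linear_combination (π * betaR r (s-r)) * hrel
    + (π * F32 (1/2) (1/2) (1-r) 1 (s-r+1/2) 1) * hco
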